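/- Let σ be a permutation of {1,…,n} sorting the costs in descending order, f_(1) ≥ f_(2) ≥ ⋯ ≥ f_(n) with f_(i) := f_{σ(i)} and p_(i) := p_{σ(i)}. Let k ∈ {1,…,n−1} and ε ≥ 0 satisfy Σ_{i=k+2}^{n} p_(i) ≤ ε · Σ_{i=1}^{k+1} p_(i) and ε · Σ_{i=1}^{k} p_(i) ≤ Σ_{i=k+1}^{n} p_(i) (so the top–k saturation regime holds). Then the worst-case expected cost over the budgeted uncertainty set equals V_b(ε; f) := max{Σᵢ qᵢ fᵢ : q ∈ Q_b(ε)} = (1+ε) Σ_{i=1}^{k} p_(i) f_(i) + (1 − (1+ε) Σ_{i=1}^{k} p_(i)) f_(k+1), and this value is attained by the distribution putting mass (1+ε)p_(i) on f_(i) for i = 1,…,k, mass 1 − (1+ε)Σ_{i=1}^{k} p_(i) on f_(k+1), and 0 elsewhere. -/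

import Mathlib

/-- in the top-k saturation regime, the budgeted-uncertainty worst-case
expected cost equals `(1+ε) Σ_{i≤k} p_(i) f_(i) + (1 − (1+ε) Σ_{i≤k} p_(i)) f_(k+1)`,
attained by the distribution saturating the top k sorted costs.
(Sorted positions are 0-indexed: `f_(i+1) = f (σ i)`, so position `k : Fin n` with
`1 ≤ k` is the `(k+1)`-st largest cost.) -/
theorem stmt6 (n : ℕ) (hn : 2 ≤ n) (p f : Fin n → ℝ)
    (hp1 : ∑ i, p i = 1) (hp : ∀ i, 0 < p i)
    (σ : Equiv.Perm (Fin n)) (hσ : ∀ i j : Fin n, i ≤ j → f (σ j) ≤ f (σ i))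
    (k : Fin n) (hk1 : 1 ≤ (k : ℕ)) (hk2 : (k : ℕ) ≤ n - 1)
    (ε : ℝ) (hε : 0 ≤ ε)
    (h1 : (∑ i ∈ Finset.univ.filter (fun i : Fin n => (k : ℕ) < (i : ℕ)), p (σ i))
          ≤ ε * ∑ i ∈ Finset.univ.filter (fun i : Fin n => (i : ℕ) ≤ (k : ℕ)), p (σ i))
    (h2 : ε * (∑ i ∈ Finset.univ.filter (fun i : Fin n => (i : ℕ) < (k : ℕ)), p (σ i))
          ≤ ∑ i ∈ Finset.univ.filter (fun i : Fin n => (k : ℕ) ≤ (i : ℕ)), p (σ i)) :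
    let topk : Finset (Fin n) := Finset.univ.filter (fun i : Fin n => (i : ℕ) < (k : ℕ))
    let Qb : Set (Fin n → ℝ) :=
      {q | (∑ i, q i = 1 ∧ ∀ i, 0 ≤ q i) ∧ ∀ i, q i ≤ (1 + ε) * p i}
    let val : ℝ := (1 + ε) * (∑ i ∈ topk, p (σ i) * f (σ i))
      + (1 - (1 + ε) * ∑ i ∈ topk, p (σ i)) * f (σ k)
    let qstar : Fin n → ℝ := fun j =>
      if ((σ.symm j : Fin n) : ℕ) < (k : ℕ) then (1 + ε) * p j
      else if σ.symm j = k then 1 - (1 + ε) * ∑ i ∈ topk, p (σ i)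
      else 0
    IsGreatest ((fun q : Fin n → ℝ => ∑ i, q i * f i) '' Qb) val ∧
    qstar ∈ Qb ∧ (∑ j, qstar j * f j) = val := by

  intro topk Qb val qstar
  have hpair : ∀ q : Fin n → ℝ, ∑ j, q j * f j = ∑ i, q (σ i) * f (σ i) :=
    fun q => (Equiv.sum_comp σ (fun j => q j * f j)).symm
  have hsum : ∀ q : Fin n → ℝ, ∑ j, q j = ∑ i, q (σ i) :=
    fun q => (Equiv.sum_comp σ q).symm
  have totalP : ∑ i, p (σ i) = 1 := by rw [Equiv.sum_comp]; exact hp1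
  set S : ℝ := ∑ i ∈ topk, p (σ i) with hSdef
  have hknot : k ∉ topk := by simp [topk]
  have hfle : (Finset.univ.filter (fun i : Fin n => (i : ℕ) ≤ (k : ℕ)))
      = insert k topk := by
    ext i
    simp only [topk, Finset.mem_insert, Finset.mem_filter, Finset.mem_univ, true_and,
      Fin.ext_iff]
    omega
  have hsumle : ∑ i ∈ Finset.univ.filter (fun i : Fin n => (i : ℕ) ≤ (k : ℕ)), p (σ i)
      = p (σ k) + S := by rw [hfle, Finset.sum_insert hknot]
  have hcomp1 : ∑ i ∈ Finset.univ.filter (fun i : Fin n => (k : ℕ) ≤ (i : ℕ)), p (σ i)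
      = 1 - S := by
    have heq : (Finset.univ.filter (fun i : Fin n => (k : ℕ) ≤ (i : ℕ)))
        = (Finset.univ.filter (fun i : Fin n => ¬ (i : ℕ) < (k : ℕ))) := by
      ext i; simp [not_lt]
    rw [heq]
    have h := Finset.sum_filter_add_sum_filter_not Finset.univ
      (fun i : Fin n => (i : ℕ) < (k : ℕ)) (fun i => p (σ i))
    rw [totalP] at h
    linarith [h]
  have hcomp2 : ∑ i ∈ Finset.univ.filter (fun i : Fin n => (k : ℕ) < (i : ℕ)), p (σ i)
      = 1 - (p (σ k) + S) := by
    have heq : (Finset.univ.filter (fun i : Fin n => (k : ℕ) < (i : ℕ)))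
        = (Finset.univ.filter (fun i : Fin n => ¬ (i : ℕ) ≤ (k : ℕ))) := by
      ext i; simp [not_le]
    have h := Finset.sum_filter_add_sum_filter_not Finset.univ
      (fun i : Fin n => (i : ℕ) ≤ (k : ℕ)) (fun i => p (σ i))
    rw [totalP, hsumle] at h
    rw [heq]; linarith [h]
  have hA : (1 + ε) * S ≤ 1 := by
    rw [hcomp1] at h2; nlinarith [h2]
  have hB : (1 : ℝ) ≤ (1 + ε) * (p (σ k) + S) := by
    rw [hcomp2, hsumle] at h1; nlinarith [h1]
  have hq : ∀ i : Fin n, qstar (σ i)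
      = if (i : ℕ) < (k : ℕ) then (1 + ε) * p (σ i)
        else if i = k then 1 - (1 + ε) * S else 0 := by
    intro i; simp [qstar, hSdef]
  have sumF : ∀ (a b : Fin n → ℝ),
      (∑ i : Fin n, (if ((i : Fin n) : ℕ) < (k : ℕ) then a i else if i = k then b i else 0))
        = (∑ i ∈ topk, a i) + b k := by
    intro a b
    rw [← Finset.sum_filter_add_sum_filter_not Finset.univ
      (fun i : Fin n => (i : ℕ) < (k : ℕ))]
    congr 1
    · refine Finset.sum_congr rfl (fun i hi => ?_)
      have hi' : (i : ℕ) < (k : ℕ) := (Finset.mem_filter.mp hi).2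
      simp [hi']
    · have step : ∀ i ∈ (Finset.univ.filter (fun i : Fin n => ¬ (i : ℕ) < (k : ℕ))),
          (if (i : ℕ) < (k : ℕ) then a i else if i = k then b i else 0)
            = (if i = k then b i else 0) := by
        intro i hi
        have hi' : ¬ (i : ℕ) < (k : ℕ) := (Finset.mem_filter.mp hi).2
        simp [hi']
      rw [Finset.sum_congr rfl step, Finset.sum_ite_eq'
        (Finset.univ.filter (fun i : Fin n => ¬ (i : ℕ) < (k : ℕ))) k b]
      simp
  have hq1 : ∑ j, qstar j = 1 := by
    rw [hsum qstar]
    simp_rw [hq]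
    rw [sumF (fun i => (1 + ε) * p (σ i)) (fun _ => 1 - (1 + ε) * S),
      ← Finset.mul_sum, ← hSdef]
    ring
  have hqval : (∑ j, qstar j * f j) = val := by
    rw [hpair qstar]
    have : ∀ i : Fin n, qstar (σ i) * f (σ i)
        = if (i : ℕ) < (k : ℕ) then (1 + ε) * p (σ i) * f (σ i)
          else if i = k then (1 - (1 + ε) * S) * f (σ i) else 0 := by
      intro i; rw [hq i]; split_ifs <;> simp
    simp_rw [this]
    rw [sumF (fun i => (1 + ε) * p (σ i) * f (σ i))
      (fun i => (1 - (1 + ε) * S) * f (σ i))]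
    simp only [mul_assoc]
    rw [← Finset.mul_sum]
  have hqmem : qstar ∈ Qb := by
    refine ⟨⟨hq1, ?_⟩, ?_⟩
    · intro j
      simp only [qstar]
      split_ifs with h h'
      · have := hp j; positivity
      · linarith
      · exact le_rfl
    · intro j
      simp only [qstar]
      split_ifs with h h'
      · exact le_refl _
      · have hj : j = σ k := by rw [← h']; simp
        rw [hj]
        nlinarith [hB]
      · have := hp j; positivity
  refine ⟨⟨⟨qstar, hqmem, hqval⟩, ?_⟩, hqmem, hqval⟩
  rintro v ⟨q, ⟨⟨hq1', hq0⟩, hqub⟩, rfl⟩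
  have key : ∀ i : Fin n, (qstar (σ i) - q (σ i)) * f (σ k)
      ≤ (qstar (σ i) - q (σ i)) * f (σ i) := by
    intro i
    rcases lt_trichotomy ((i : ℕ)) ((k : ℕ)) with hlt | heq | hgt
    · have hd : 0 ≤ qstar (σ i) - q (σ i) := by
        rw [hq i, if_pos hlt]; linarith [hqub (σ i)]
      have hg : f (σ k) ≤ f (σ i) := hσ i k (by rw [Fin.le_def]; omega)
      exact mul_le_mul_of_nonneg_left hg hd
    · have : i = k := Fin.ext heq
      rw [this]
    · have hd : qstar (σ i) - q (σ i) ≤ 0 := by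
        rw [hq i, if_neg (by omega), if_neg (by intro h; rw [h] at hgt; omega)]
        linarith [hq0 (σ i)]
      have hg : f (σ i) ≤ f (σ k) := hσ k i (by rw [Fin.le_def]; omega)
      exact mul_le_mul_of_nonpos_left hg hd
  have hsum0 : ∑ i, (qstar (σ i) - q (σ i)) = 0 := by
    rw [Finset.sum_sub_distrib, ← hsum qstar, ← hsum q, hq1, hq1']
    ring
  have hle := Finset.sum_le_sum (fun i (_ : i ∈ Finset.univ) => key i)
  rw [← Finset.sum_mul, hsum0, zero_mul] at hle
  have hexp : ∑ i, (qstar (σ i) - q (σ i)) * f (σ i)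
      = ∑ i, qstar (σ i) * f (σ i) - ∑ i, q (σ i) * f (σ i) := by
    rw [← Finset.sum_sub_distrib]
    exact Finset.sum_congr rfl (fun i _ => by ring)
  rw [hexp] at hle
  show (∑ i, q i * f i) ≤ val
  rw [hpair q, ← hqval, hpair qstar]
  linarith
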